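/- (Milnor–Švarc) Let X be a proper geodesic metric space and let a group Γ act on X by isometries, properly discontinuously (for every x ∈ X and r ≥ 0 the set {g ∈ Γ : d(x, g·x) ≤ r} is finite) and cocompactly (there is a compact K ⊆ X with X = ⋃_{g ∈ Γ} g·K). Then Γ admits a finite generating set S, and for every basepoint x₀ ∈ X the orbit map g ↦ g·x₀ is a quasi-isometry from the Cayley graph Δ(Γ,S), equipped with its graph distance, to X. -/

import Mathlib

/-- The Cayley graph of a group `Γ` with respect to a generating set `S`:
vertices are group elements, and `g ≠ h` are adjacent iff `g⁻¹ * h ∈ S ∪ S⁻¹`. -/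
def cayleyGraph {Γ : Type*} [Group Γ] (S : Set Γ) : SimpleGraph Γ where
  Adj g h := g ≠ h ∧ g⁻¹ * h ∈ S ∪ S⁻¹
  symm := by
    constructor
    rintro g h ⟨hne, hm⟩
    refine ⟨hne.symm, ?_⟩
    have : h⁻¹ * g = (g⁻¹ * h)⁻¹ := by group
    rw [this]
    rcases hm with h1 | h1
    · exact Or.inr (by simpa using h1)
    · exact Or.inl (by simpa using h1)
  loopless := ⟨fun g h => h.1 rfl⟩

/-- From a chain whose consecutive members are equal or adjacent, get a short walk. -/
lemma cayley_chain_walk {Γ : Type*} [Group Γ] (S : Set Γ) (f : ℕ → Γ) :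
    ∀ n : ℕ, (∀ i < n, f i = f (i + 1) ∨ (cayleyGraph S).Adj (f i) (f (i + 1))) →
      ∃ w : (cayleyGraph S).Walk (f 0) (f n), w.length ≤ n := by
  intro n
  induction n with
  | zero => intro _; exact ⟨SimpleGraph.Walk.nil, le_rfl⟩
  | succ n ih =>
    intro hstep
    obtain ⟨w, hw⟩ := ih (fun i hi => hstep i (Nat.lt_succ_of_lt hi))
    rcases hstep n (Nat.lt_succ_self n) with heq | hadj
    · exact ⟨w.copy rfl heq, by simpa using Nat.le_succ_of_le hw⟩
    · refine ⟨w.concat hadj, ?_⟩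
      rw [SimpleGraph.Walk.length_concat]
      exact Nat.succ_le_succ hw

/-- If two vertices of a Cayley graph are reachable, then the quotient lies in the
closure of the generating set. -/
lemma cayley_reachable_mem_closure {Γ : Type*} [Group Γ] {S : Set Γ} {a b : Γ}
    (h : (cayleyGraph S).Reachable a b) : a⁻¹ * b ∈ Subgroup.closure S := by
  obtain ⟨w⟩ := h
  induction w with
  | nil => simpa using Subgroup.one_mem _
  | @cons a c b hadj w ih =>
    have h1 : a⁻¹ * c ∈ Subgroup.closure S := by
      rcases hadj.2 with hs | hs
      · exact Subgroup.subset_closure hs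
      · have : (a⁻¹ * c)⁻¹ ∈ S := by simpa using hs
        simpa using (Subgroup.inv_mem _ (Subgroup.subset_closure this))
    have := Subgroup.mul_mem _ h1 ih
    simpa [mul_assoc] using this

theorem milnor_svarc
    {X Γ : Type*} [MetricSpace X] [ProperSpace X] [Nonempty X]
    [Group Γ] [MulAction Γ X]
    (hgeo : ∀ x y : X, ∃ γ : ℝ → X, γ 0 = x ∧ γ (dist x y) = y ∧
      ∀ s ∈ Set.Icc (0 : ℝ) (dist x y), ∀ t ∈ Set.Icc (0 : ℝ) (dist x y),
        dist (γ s) (γ t) = |s - t|)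
    (hiso : ∀ (g : Γ) (x y : X), dist (g • x) (g • y) = dist x y)
    (hpd : ∀ (x : X) (r : ℝ), 0 ≤ r → {g : Γ | dist x (g • x) ≤ r}.Finite)
    (hcc : ∃ K : Set X, IsCompact K ∧ ∀ x : X, ∃ g : Γ, ∃ k ∈ K, x = g • k) :
    ∃ S : Finset Γ, Subgroup.closure (S : Set Γ) = ⊤ ∧
      ∀ x₀ : X,
        (∃ k₁ > (0 : ℝ), ∃ k₂ ≥ (0 : ℝ), ∃ k₃ ≥ (0 : ℝ), ∃ k₄ ≥ (0 : ℝ),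
          ∀ g h : Γ,
            k₁ * ((cayleyGraph (S : Set Γ)).dist g h : ℝ) - k₂ ≤ dist (g • x₀) (h • x₀) ∧
            dist (g • x₀) (h • x₀) ≤ k₃ * ((cayleyGraph (S : Set Γ)).dist g h : ℝ) + k₄) ∧
        (∃ r ≥ (0 : ℝ), ∀ y : X, ∃ g : Γ, dist y (g • x₀) ≤ r) := by
  classical
  obtain ⟨K, hKc, hKcov⟩ := hcc
  obtain ⟨p⟩ := ‹Nonempty X›
  obtain ⟨R₀, hR₀⟩ := hKc.isBounded.subset_closedBall p
  set R : ℝ := max R₀ 0 with hRdef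
  have hR : (0 : ℝ) ≤ R := le_max_right _ _
  have hKR : K ⊆ Metric.closedBall p R :=
    hR₀.trans (Metric.closedBall_subset_closedBall (le_max_left _ _))
  -- chooser: every point is within R of some orbit point
  have hchoose : ∀ y : X, ∃ g : Γ, dist y (g • p) ≤ R := by
    intro y
    obtain ⟨g, k, hk, rfl⟩ := hKcov y
    refine ⟨g, ?_⟩
    rw [hiso g k p]
    simpa [Metric.mem_closedBall, dist_comm] using hKR hk
  choose c hc using hchoose
  -- the generating set
  have h2R : (0 : ℝ) ≤ 2 * R + 1 := by linarith
  set Sfin : Finset Γ := ((hpd p (2 * R + 1) h2R).toFinset.erase 1) with hSdef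
  have hmemS : ∀ g : Γ, g ∈ Sfin ↔ g ≠ 1 ∧ dist p (g • p) ≤ 2 * R + 1 := by
    intro g
    simp [hSdef, Set.Finite.mem_toFinset, Finset.mem_erase, and_comm]
  -- distance identity
  have hdiff : ∀ a b : Γ, dist (a • p) (b • p) = dist p ((a⁻¹ * b) • p) := by
    intro a b
    rw [← hiso a p ((a⁻¹ * b) • p), smul_smul]
    simp [mul_assoc]
  -- S is symmetric
  have hSinv : ∀ g : Γ, g ∈ Sfin → g⁻¹ ∈ Sfin := by
    intro g hg
    rw [hmemS] at hg ⊢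
    refine ⟨inv_ne_one.2 hg.1, ?_⟩
    have : dist p (g⁻¹ • p) = dist (g • p) p := by
      rw [← hiso g p (g⁻¹ • p), smul_smul]; simp
    rw [this, dist_comm]; exact hg.2
  have hSsetinv : ((Sfin : Set Γ) ∪ (Sfin : Set Γ)⁻¹) = (Sfin : Set Γ) := by
    apply Set.union_eq_self_of_subset_right
    intro g hg
    have : g⁻¹ ∈ Sfin := hg
    simpa using hSinv _ this
  -- adjacency criterion
  have hadjcrit : ∀ a b : Γ, dist (a • p) (b • p) ≤ 2 * R + 1 →
      a = b ∨ (cayleyGraph (Sfin : Set Γ)).Adj a b := by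
    intro a b hd
    by_cases hab : a = b
    · exact Or.inl hab
    · refine Or.inr ⟨hab, ?_⟩
      rw [hSsetinv, Finset.mem_coe, hmemS]
      constructor
      · intro hone
        exact hab (by rwa [inv_mul_eq_one] at hone)
      · rw [← hdiff]; exact hd
  -- key chain lemma
  have key : ∀ g h : Γ, ∃ w : (cayleyGraph (Sfin : Set Γ)).Walk g h,
      (w.length : ℝ) ≤ dist (g • p) (h • p) + 2 := by
    intro g h
    set d : ℝ := dist (g • p) (h • p) with hddef
    have hd0 : (0 : ℝ) ≤ d := dist_nonneg
    obtain ⟨γ, hγ0, hγd, hγiso⟩ := hgeo (g • p) (h • p)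
    set m : ℕ := ⌈d⌉₊ + 1 with hmdef
    have hm0 : (0 : ℝ) < m := by positivity
    have hdm : d ≤ (m : ℝ) := by
      calc d ≤ (⌈d⌉₊ : ℝ) := Nat.le_ceil d
        _ ≤ m := by exact_mod_cast Nat.le_succ _
    set t : ℕ → ℝ := fun i => (i : ℝ) * (d / m) with htdef
    have ht_mem : ∀ i ≤ m, t i ∈ Set.Icc (0 : ℝ) d := by
      intro i hi
      constructor
      · positivity
      · have : (i : ℝ) * (d / m) ≤ (m : ℝ) * (d / m) := by
          apply mul_le_mul_of_nonneg_right (by exact_mod_cast hi)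
          positivity
        calc t i ≤ (m : ℝ) * (d / m) := this
          _ = d := by field_simp
    have htm : t m = d := by simp only [htdef]; field_simp
    -- the chain
    set f : ℕ → Γ := fun i => if i = 0 then g else if m ≤ i then h else c (γ (t i))
      with hfdef
    have hf0 : f 0 = g := by simp [hfdef]
    have hfm : f m = h := by
      simp only [hfdef, hmdef]
      simp
    have hnear : ∀ i ≤ m, dist (f i • p) (γ (t i)) ≤ R := by
      intro i hi
      by_cases h0 : i = 0
      · subst h0
        have : t 0 = 0 := by simp [htdef]
        rw [hf0, this, hγ0]
        simpa using hR
      · by_cases hM : m ≤ i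
        · have him : i = m := le_antisymm hi hM
          subst him
          rw [hfm, htm, hγd]
          simpa using hR
        · have : f i = c (γ (t i)) := by simp [hfdef, h0, hM]
          rw [this, dist_comm]
          exact hc _
    have hstep : ∀ i < m, f i = f (i + 1) ∨
        (cayleyGraph (Sfin : Set Γ)).Adj (f i) (f (i + 1)) := by
      intro i hi
      apply hadjcrit
      have h1 : dist (f i • p) (γ (t i)) ≤ R := hnear i (le_of_lt hi)
      have h2 : dist (f (i + 1) • p) (γ (t (i + 1))) ≤ R := hnear (i + 1) hi
      have h3 : dist (γ (t i)) (γ (t (i + 1))) = d / m := by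
        rw [hγiso (t i) (ht_mem i (le_of_lt hi)) (t (i + 1)) (ht_mem (i + 1) hi)]
        have : t i - t (i + 1) = -(d / m) := by
          simp only [htdef]; push_cast; ring
        rw [this, abs_neg, abs_of_nonneg (by positivity)]
      have h4 : d / m ≤ 1 := by
        rw [div_le_one hm0]; exact hdm
      calc dist (f i • p) (f (i + 1) • p)
          ≤ dist (f i • p) (γ (t i)) + dist (γ (t i)) (γ (t (i + 1))) +
            dist (γ (t (i + 1))) (f (i + 1) • p) := dist_triangle4 _ _ _ _
        _ ≤ R + d / m + R := by
            have h2' : dist (γ (t (i + 1))) (f (i + 1) • p) ≤ R := by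
              rw [dist_comm]; exact h2
            linarith [h3.le, h3.ge]
        _ ≤ 2 * R + 1 := by linarith
    obtain ⟨w, hw⟩ := cayley_chain_walk (Sfin : Set Γ) f m hstep
    refine ⟨w.copy hf0 hfm, ?_⟩
    rw [SimpleGraph.Walk.length_copy]
    have hmle : (m : ℝ) ≤ d + 2 := by
      have := Nat.ceil_lt_add_one hd0
      push_cast [hmdef]
      linarith
    calc (w.length : ℝ) ≤ (m : ℝ) := by exact_mod_cast hw
      _ ≤ d + 2 := hmle
  refine ⟨Sfin, ?_, ?_⟩
  · -- generation
    rw [eq_top_iff]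
    intro g _
    obtain ⟨w, _⟩ := key 1 g
    have := cayley_reachable_mem_closure (S := (Sfin : Set Γ)) w.reachable
    simpa using this
  · intro x₀
    -- the step bound
    set M : ℝ := ∑ s ∈ Sfin, dist x₀ (s • x₀) with hMdef
    have hM0 : (0 : ℝ) ≤ M := Finset.sum_nonneg fun _ _ => dist_nonneg
    have hdiffx : ∀ a b : Γ, dist (a • x₀) (b • x₀) = dist x₀ ((a⁻¹ * b) • x₀) := by
      intro a b
      rw [← hiso a x₀ ((a⁻¹ * b) • x₀), smul_smul]
      simp [mul_assoc]
    have hstepM : ∀ a b : Γ, (cayleyGraph (Sfin : Set Γ)).Adj a b →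
        dist (a • x₀) (b • x₀) ≤ M := by
      intro a b hadj
      have hmem : a⁻¹ * b ∈ Sfin := by
        have := hadj.2
        rw [hSsetinv] at this
        exact_mod_cast this
      rw [hdiffx]
      exact Finset.single_le_sum (f := fun s => dist x₀ (s • x₀))
        (fun _ _ => dist_nonneg) hmem
    have hwalkM : ∀ (a b : Γ) (w : (cayleyGraph (Sfin : Set Γ)).Walk a b),
        dist (a • x₀) (b • x₀) ≤ M * w.length := by
      intro a b w
      induction w with
      | nil => simp
      | @cons a u b hadj w ih =>
        calc dist (a • x₀) (b • x₀)
            ≤ dist (a • x₀) (u • x₀) + dist (u • x₀) (b • x₀) := dist_triangle _ _ _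
          _ ≤ M + M * w.length := add_le_add (hstepM _ _ hadj) ih
          _ = M * (SimpleGraph.Walk.cons hadj w).length := by
              simp [SimpleGraph.Walk.length_cons]; ring
    constructor
    · refine ⟨1, one_pos, 2 + 2 * dist p x₀, by positivity, M, hM0, 0, le_rfl, ?_⟩
      intro g h
      constructor
      · -- lower bound
        obtain ⟨w, hw⟩ := key g h
        have hdle : ((cayleyGraph (Sfin : Set Γ)).dist g h : ℝ) ≤ (w.length : ℝ) := by
          exact_mod_cast SimpleGraph.dist_le w
        have hcomp : dist (g • p) (h • p) ≤ dist (g • x₀) (h • x₀) + 2 * dist p x₀ := by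
          have e1 : dist (g • p) (g • x₀) = dist p x₀ := hiso g p x₀
          have e2 : dist (h • x₀) (h • p) = dist x₀ p := hiso h x₀ p
          calc dist (g • p) (h • p)
              ≤ dist (g • p) (g • x₀) + dist (g • x₀) (h • x₀) +
                dist (h • x₀) (h • p) := dist_triangle4 _ _ _ _
            _ = dist (g • x₀) (h • x₀) + 2 * dist p x₀ := by
                rw [e1, e2, dist_comm x₀ p]; ring
        linarith [hdle]
      · -- upper bound
        have hreach : (cayleyGraph (Sfin : Set Γ)).Reachable g h := (key g h).choose.reachable
        obtain ⟨w, hwlen⟩ := hreach.exists_walk_length_eq_dist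
        have := hwalkM g h w
        rw [hwlen] at this
        linarith
    · -- coboundedness
      refine ⟨R + dist p x₀, by positivity, ?_⟩
      intro y
      refine ⟨c y, ?_⟩
      calc dist y (c y • x₀) ≤ dist y (c y • p) + dist (c y • p) (c y • x₀) :=
            dist_triangle _ _ _
        _ ≤ R + dist p x₀ := add_le_add (hc y) (le_of_eq (hiso _ _ _))
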